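/- arXiv:1511.09238 — 2 statements merged into one kernel-verified Lean document; each statement's English description precedes it below -/
import Mathlib

section
/- Let G be a totally disconnected locally compact Hausdorff topological group and g ∈ G. Then g normalises some compact open subgroup of G (i.e., there exists a compact open subgroup U with gUg⁻¹ = U) if and only if s(g) = 1 and s(g⁻¹) = 1. -/
open MeasureTheory Pointwise

variable {G : Type*}

/-- The conjugate subgroup `gUg⁻¹`. -/
def conjSubgroup [Group G] (g : G) (U : Subgroup G) : Subgroup G :=
  U.map (MulAut.conj g).toMonoidHom

/-- A subgroup is compact open if its carrier set is compact and open. -/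
def Subgroup.IsCompactOpen [Group G] [TopologicalSpace G] (U : Subgroup G) : Prop :=
  IsCompact (U : Set G) ∧ IsOpen (U : Set G)

/-- The scale `s(g) = min_U [gUg⁻¹ : gUg⁻¹ ∩ U]`, minimum over compact open subgroups. -/
noncomputable def scale [Group G] [TopologicalSpace G] (g : G) : ℕ :=
  sInf { n : ℕ | ∃ U : Subgroup G, U.IsCompactOpen ∧ n = U.relIndex (conjSubgroup g U) }

section auxlemmas

set_option linter.unusedSectionVars false

variable [Group G] [TopologicalSpace G] [IsTopologicalGroup G]

lemma conjSubgroup_conjSubgroup_inv (g : G) (U : Subgroup G) :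
    conjSubgroup g (conjSubgroup g⁻¹ U) = U := by
  simp only [conjSubgroup, Subgroup.map_map]
  convert U.map_id
  ext x
  simp [mul_assoc]

lemma conjSubgroup_mono (g : G) {U V : Subgroup G} (h : U ≤ V) :
    conjSubgroup g U ≤ conjSubgroup g V :=
  Subgroup.map_mono h

lemma conjSubgroup_inf (g : G) (U V : Subgroup G) :
    conjSubgroup g (U ⊓ V) = conjSubgroup g U ⊓ conjSubgroup g V :=
  Subgroup.map_inf U V _ (MulAut.conj g).injective

lemma conjSubgroup_coe (g : G) (U : Subgroup G) :
    (conjSubgroup g U : Set G) = (fun x => g * x * g⁻¹) '' U := rfl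

lemma IsCompactOpen.conj (g : G) {U : Subgroup G} (h : U.IsCompactOpen) :
    (conjSubgroup g U).IsCompactOpen := by
  have he : (conjSubgroup g U : Set G) =
      ((Homeomorph.mulRight g⁻¹).trans (Homeomorph.mulLeft g)) '' U := by
    rw [conjSubgroup_coe]; ext x; simp [mul_assoc]
  constructor
  · rw [he]; exact h.1.image (Homeomorph.continuous _)
  · rw [he]; exact (Homeomorph.isOpen_image _).mpr h.2

lemma relindex_conjSubgroup (g : G) (X A : Subgroup G) :
    (conjSubgroup g X).relIndex (conjSubgroup g A) = X.relIndex A := by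
  simp only [conjSubgroup]
  have := Subgroup.relIndex_comap (H := X.map (MulAut.conj g).toMonoidHom)
    (f := (MulAut.conj g).toMonoidHom) A
  rw [Subgroup.comap_map_eq_self_of_injective (MulAut.conj g).injective] at this
  exact this.symm

lemma relindex_ne_zero_of_compact_open {A B : Subgroup G}
    (hA : IsCompact (A : Set G)) (hB : IsOpen (B : Set G)) :
    B.relIndex A ≠ 0 := by
  have : CompactSpace A := isCompact_iff_compactSpace.mp hA
  have hopen : IsOpen ((B.subgroupOf A : Subgroup A) : Set A) := by
    have : ((B.subgroupOf A : Subgroup A) : Set A) = (Subtype.val : A → G) ⁻¹' B := rfl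
    rw [this]
    exact hB.preimage continuous_subtype_val
  have : Finite (A ⧸ B.subgroupOf A) :=
    Subgroup.quotient_finite_of_isOpen _ hopen
  exact Subgroup.index_ne_zero_of_finite

lemma isCompactOpen_inf {U V : Subgroup G} (hU : U.IsCompactOpen) (hV : V.IsCompactOpen) :
    (U ⊓ V).IsCompactOpen := by
  constructor
  · rw [Subgroup.coe_inf]
    exact hU.1.inter_right (V.isClosed_of_isOpen hV.2)
  · rw [Subgroup.coe_inf]
    exact hU.2.inter hV.2

/-- Key algebraic lemma: if `gUg⁻¹ ≤ U` and `g⁻¹Vg ≤ V` with `U`, `V` compact open,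
then `gUg⁻¹ = U`. -/
lemma conj_eq_of_le {g : G} {U V : Subgroup G} (hUco : U.IsCompactOpen)
    (hVco : V.IsCompactOpen) (hU : conjSubgroup g U ≤ U) (hV : conjSubgroup g⁻¹ V ≤ V) :
    conjSubgroup g U = U := by
  set U' := conjSubgroup g U with hU'
  set V' := conjSubgroup g V with hV'
  have hVle : V ≤ V' := by
    have := conjSubgroup_mono g hV
    rwa [conjSubgroup_conjSubgroup_inv] at this
  have hU'co : U'.IsCompactOpen := IsCompactOpen.conj g hUco
  have hV'co : V'.IsCompactOpen := IsCompactOpen.conj g hVco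
  set X : Subgroup G := (U ⊓ V) ⊓ (U' ⊓ V') with hX
  have hXco : X.IsCompactOpen := isCompactOpen_inf (isCompactOpen_inf hUco hVco) (isCompactOpen_inf hU'co hV'co)
  have hXUV : X ≤ U ⊓ V := inf_le_left
  have hXU'V' : X ≤ U' ⊓ V' := inf_le_right
  -- conjugation invariance
  have hp : (U' ⊓ V').relIndex U' = (U ⊓ V).relIndex U := by
    rw [hU', hV', ← conjSubgroup_inf, relindex_conjSubgroup]
  have hq : (U' ⊓ V').relIndex V' = (U ⊓ V).relIndex V := by
    rw [hU', hV', ← conjSubgroup_inf, relindex_conjSubgroup]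
  set c := X.relIndex (U ⊓ V)
  set c' := X.relIndex (U' ⊓ V')
  set p := (U ⊓ V).relIndex U
  set q := (U ⊓ V).relIndex V
  set m := U'.relIndex U
  set k := V.relIndex V'
  have ha : c * p = X.relIndex U :=
    Subgroup.relIndex_mul_relIndex X (U ⊓ V) U hXUV inf_le_left
  have hb : c * q = X.relIndex V :=
    Subgroup.relIndex_mul_relIndex X (U ⊓ V) V hXUV inf_le_right
  have ha' : c' * p = X.relIndex U' := by
    rw [← hp]; exact Subgroup.relIndex_mul_relIndex X (U' ⊓ V') U' hXU'V' inf_le_left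
  have hb' : c' * q = X.relIndex V' := by
    rw [← hq]; exact Subgroup.relIndex_mul_relIndex X (U' ⊓ V') V' hXU'V' inf_le_right
  have hXU' : X ≤ U' := hXU'V'.trans inf_le_left
  have hXV : X ≤ V := hXUV.trans inf_le_right
  have ham : X.relIndex U' * m = X.relIndex U :=
    Subgroup.relIndex_mul_relIndex X U' U hXU' hU
  have hbk : X.relIndex V * k = X.relIndex V' :=
    Subgroup.relIndex_mul_relIndex X V V' hXV hVle
  have hne : X.relIndex U' * X.relIndex V ≠ 0 :=
    mul_ne_zero (relindex_ne_zero_of_compact_open hU'co.1 hXco.2)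
      (relindex_ne_zero_of_compact_open hVco.1 hXco.2)
  -- a * b' = a' * b, and a = a' * m, b' = b * k
  have key : (X.relIndex U' * X.relIndex V) * (m * k)
      = X.relIndex U' * X.relIndex V := by
    calc (X.relIndex U' * X.relIndex V) * (m * k)
        = (X.relIndex U' * m) * (X.relIndex V * k) := by ring
      _ = X.relIndex U * X.relIndex V' := by rw [ham, hbk]
      _ = (c * p) * (c' * q) := by rw [ha, hb']
      _ = (c' * p) * (c * q) := by ring
      _ = X.relIndex U' * X.relIndex V := by rw [ha', hb]
  have hmk : m * k = 1 := by
    have := key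
    nth_rewrite 2 [← mul_one (X.relIndex U' * X.relIndex V)] at this
    exact Nat.eq_of_mul_eq_mul_left (Nat.pos_of_ne_zero hne) this
  have hm1 : m = 1 := Nat.dvd_one.mp ⟨k, hmk.symm⟩
  exact le_antisymm hU (Subgroup.relIndex_eq_one.mp hm1)

end auxlemmas

/-- `g` normalises a compact open subgroup iff `s(g) = 1 = s(g⁻¹)`. -/
theorem normalises_compact_open_iff_scale_one
    [Group G] [TopologicalSpace G] [IsTopologicalGroup G] [LocallyCompactSpace G] [T2Space G]
    [TotallyDisconnectedSpace G] (g : G) :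
    (∃ U : Subgroup G, U.IsCompactOpen ∧ conjSubgroup g U = U) ↔
      scale g = 1 ∧ scale g⁻¹ = 1 := by
  have hscale : ∀ (h : G) (U : Subgroup G), U.IsCompactOpen → conjSubgroup h U = U →
      scale h = 1 := by
    intro h U hUco hUfix
    have h1 : (1 : ℕ) ∈ { n : ℕ | ∃ U : Subgroup G, U.IsCompactOpen ∧
        n = U.relIndex (conjSubgroup h U) } := by
      exact ⟨U, hUco, by rw [hUfix, Subgroup.relIndex_self]⟩
    refine le_antisymm (Nat.sInf_le h1) ?_
    have hmem := Nat.sInf_mem (⟨1, h1⟩ : Set.Nonempty _)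
    obtain ⟨W, hWco, hW⟩ := hmem
    have h0 : W.relIndex (conjSubgroup h W) ≠ 0 :=
      relindex_ne_zero_of_compact_open (IsCompactOpen.conj h hWco).1 hWco.2
    have heq : scale h = W.relIndex (conjSubgroup h W) := hW
    omega
  constructor
  · rintro ⟨U, hUco, hUfix⟩
    refine ⟨hscale g U hUco hUfix, hscale g⁻¹ U hUco ?_⟩
    nth_rewrite 1 [← hUfix]
    have := conjSubgroup_conjSubgroup_inv g⁻¹ U
    rwa [inv_inv] at this
  · rintro ⟨hg, hg'⟩
    have getU : ∀ h : G, scale h = 1 → ∃ U : Subgroup G, U.IsCompactOpen ∧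
        conjSubgroup h U ≤ U := by
      intro h hh
      unfold scale at hh
      have hne : { n : ℕ | ∃ U : Subgroup G, U.IsCompactOpen ∧
          n = U.relIndex (conjSubgroup h U) }.Nonempty := by
        by_contra hc
        rw [Set.not_nonempty_iff_eq_empty] at hc
        rw [hc, Nat.sInf_empty] at hh
        exact one_ne_zero hh.symm
      have := Nat.sInf_mem hne
      rw [hh] at this
      obtain ⟨U, hUco, hU⟩ := this
      exact ⟨U, hUco, Subgroup.relIndex_eq_one.mp hU.symm⟩
    obtain ⟨U, hUco, hU⟩ := getU g hg
    obtain ⟨V, hVco, hV⟩ := getU g⁻¹ hg'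
    exact ⟨U, hUco, conj_eq_of_le hUco hVco hU hV⟩
end

section
/- Let G be a totally disconnected locally compact Hausdorff topological group, g ∈ G, and U a compact open subgroup of G. Then there exists N ≥ 0 such that the compact open subgroup V = ⋂_{i=0}^{N} gⁱUg⁻ⁱ is tidy above for g. -/
open MeasureTheory Pointwise

variable {G : Type*}

/-- `U₊ = ⋂_{n ≥ 0} gⁿ U g⁻ⁿ`. -/
def plusSubgroup [Group G] (g : G) (U : Subgroup G) : Subgroup G :=
  ⨅ n : ℕ, conjSubgroup (g ^ n) U

/-- `U₋ = ⋂_{n ≥ 0} g⁻ⁿ U gⁿ`. -/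
def minusSubgroup [Group G] (g : G) (U : Subgroup G) : Subgroup G :=
  ⨅ n : ℕ, conjSubgroup (g⁻¹ ^ n) U

/-- `U` is tidy above for `g` if `[gU₊g⁻¹ : U₊] = [gUg⁻¹ : gUg⁻¹ ∩ U]`. -/
def TidyAbove [Group G] (g : G) (U : Subgroup G) : Prop :=
  (plusSubgroup g U).relIndex (conjSubgroup g (plusSubgroup g U)) = U.relIndex (conjSubgroup g U)

/-- `U₊₊ = ⋃_{n ≥ 0} gⁿ U₊ g⁻ⁿ` as a set. -/
def plusPlusSet [Group G] (g : G) (U : Subgroup G) : Set G :=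
  ⋃ n : ℕ, ((conjSubgroup (g ^ n) (plusSubgroup g U) : Subgroup G) : Set G)

/-- `U₋₋ = ⋃_{n ≥ 0} g⁻ⁿ U₋ gⁿ` as a set. -/
def minusMinusSet [Group G] (g : G) (U : Subgroup G) : Set G :=
  ⋃ n : ℕ, ((conjSubgroup (g⁻¹ ^ n) (minusSubgroup g U) : Subgroup G) : Set G)

/-- `U` is tidy below for `g` if `U₊₊` and `U₋₋` are closed. -/
def TidyBelow [Group G] [TopologicalSpace G] (g : G) (U : Subgroup G) : Prop :=
  IsClosed (plusPlusSet g U) ∧ IsClosed (minusMinusSet g U)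

/-- `U` is tidy for `g` if it is tidy above and tidy below for `g`. -/
def Tidy [Group G] [TopologicalSpace G] (g : G) (U : Subgroup G) : Prop :=
  TidyAbove g U ∧ TidyBelow g U

section Aux
variable [Group G]

lemma mem_conjSubgroup' {g x : G} {U : Subgroup G} :
    x ∈ conjSubgroup g U ↔ g⁻¹ * x * g ∈ U := by
  constructor
  · rintro ⟨u, hu, rfl⟩
    simpa [MulAut.conj_apply, mul_assoc] using hu
  · intro h
    exact ⟨g⁻¹ * x * g, h, by simp [MulAut.conj_apply, mul_assoc]⟩

lemma conjSubgroup_iInf' {ι : Sort*} (g : G) (H : ι → Subgroup G) :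
    conjSubgroup g (⨅ i, H i) = ⨅ i, conjSubgroup g (H i) := by
  ext x; simp [mem_conjSubgroup', Subgroup.mem_iInf]

lemma conjSubgroup_conjSubgroup' (a b : G) (U : Subgroup G) :
    conjSubgroup a (conjSubgroup b U) = conjSubgroup (a * b) U := by
  ext x; simp [mem_conjSubgroup', mul_inv_rev, mul_assoc]

lemma conjSubgroup_one' (U : Subgroup G) : conjSubgroup 1 U = U := by
  ext x; simp [mem_conjSubgroup']

lemma coe_conjSubgroup_preimage (g : G) (U : Subgroup G) :
    (conjSubgroup g U : Set G) = (fun x => g⁻¹ * x * g) ⁻¹' (U : Set G) := by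
  ext x; simp [mem_conjSubgroup']

lemma coe_conjSubgroup_image (g : G) (U : Subgroup G) :
    (conjSubgroup g U : Set G) = (fun x => g * x * g⁻¹) '' (U : Set G) := by
  ext x
  simp only [SetLike.mem_coe, mem_conjSubgroup', Set.mem_image]
  constructor
  · intro h; exact ⟨g⁻¹ * x * g, h, by group⟩
  · rintro ⟨u, hu, rfl⟩; simpa [mul_assoc] using hu

/-- The key index lemma: if `Q ≤ W` and `W ⊆ Q * U` then `[Q : Q ∩ U] = [W : W ∩ U]`. -/
lemma relindex_eq_of_cover {U Q W : Subgroup G} (hQW : Q ≤ W)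
    (hcov : (W : Set G) ⊆ (Q : Set G) * (U : Set G)) :
    U.relIndex Q = U.relIndex W := by
  show (U.subgroupOf Q).index = (U.subgroupOf W).index
  unfold Subgroup.index
  apply Nat.card_congr
  refine Equiv.ofBijective
    (Quotient.map' (fun q : Q => (⟨(q : G), hQW q.2⟩ : W)) ?_) ⟨?_, ?_⟩
  · intro a b h
    rw [QuotientGroup.leftRel_apply] at h ⊢
    rw [Subgroup.mem_subgroupOf] at h ⊢
    exact h
  · intro a b
    refine Quotient.inductionOn₂' a b fun a b h => ?_
    rw [Quotient.map'_mk'', Quotient.map'_mk''] at h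
    have h' := Quotient.exact' h
    rw [QuotientGroup.leftRel_apply, Subgroup.mem_subgroupOf] at h'
    apply Quotient.sound'
    rw [QuotientGroup.leftRel_apply, Subgroup.mem_subgroupOf]
    exact h'
  · intro w
    refine Quotient.inductionOn' w fun w => ?_
    obtain ⟨q, hq, u, hu, hqu⟩ := hcov w.2
    refine ⟨Quotient.mk'' ⟨q, hq⟩, ?_⟩
    rw [Quotient.map'_mk'']
    apply Quotient.sound'
    rw [QuotientGroup.leftRel_apply, Subgroup.mem_subgroupOf]
    show q⁻¹ * (w : G) ∈ U
    have : q⁻¹ * (w : G) = u := by rw [← hqu]; group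
    rw [this]; exact hu

end Aux

section Main
variable [Group G] (g : G) (U : Subgroup G)

/-- abbreviation for `gⁱUg⁻ⁱ`. -/
noncomputable def Cj (i : ℕ) : Subgroup G := conjSubgroup (g ^ i) U

lemma Cj_zero : Cj g U 0 = U := by simp [Cj, conjSubgroup_one']

lemma conjSubgroup_Cj (i : ℕ) : conjSubgroup g (Cj g U i) = Cj g U (i + 1) := by
  rw [Cj, Cj, conjSubgroup_conjSubgroup', ← pow_succ']

lemma plusSubgroup_eq_iInf_Cj : plusSubgroup g U = ⨅ n : ℕ, Cj g U n := rfl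

/-- `V N = ⋂_{i=0}^N gⁱUg⁻ⁱ`. -/
lemma V_eq (N : ℕ) :
    (⨅ i : Fin (N + 1), conjSubgroup (g ^ (i : ℕ)) U) = ⨅ i : Fin (N + 1), Cj g U i := rfl

lemma conj_V_eq (N : ℕ) :
    conjSubgroup g (⨅ i : Fin (N + 1), conjSubgroup (g ^ (i : ℕ)) U)
      = ⨅ i : Fin (N + 1), Cj g U ((i : ℕ) + 1) := by
  rw [conjSubgroup_iInf']
  exact iInf_congr fun i => conjSubgroup_Cj g U i

lemma plus_V_eq (N : ℕ) :
    plusSubgroup g (⨅ i : Fin (N + 1), conjSubgroup (g ^ (i : ℕ)) U) = plusSubgroup g U := by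
  have h1 : plusSubgroup g (⨅ i : Fin (N + 1), conjSubgroup (g ^ (i : ℕ)) U)
      = ⨅ n : ℕ, ⨅ i : Fin (N + 1), Cj g U (n + (i : ℕ)) := by
    unfold plusSubgroup
    refine iInf_congr fun n => ?_
    rw [conjSubgroup_iInf']
    refine iInf_congr fun i => ?_
    rw [conjSubgroup_conjSubgroup', ← pow_add]
    rfl
  rw [h1, plusSubgroup_eq_iInf_Cj]
  apply le_antisymm
  · refine le_iInf fun m => ?_
    have := iInf_le (fun n : ℕ => ⨅ i : Fin (N + 1), Cj g U (n + (i : ℕ))) m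
    refine this.trans ?_
    have := iInf_le (fun i : Fin (N + 1) => Cj g U (m + (i : ℕ))) ⟨0, Nat.succ_pos N⟩
    simpa using this
  · exact le_iInf fun n => le_iInf fun i => iInf_le _ (n + (i : ℕ))

lemma conj_plus_eq : conjSubgroup g (plusSubgroup g U) = ⨅ n : ℕ, Cj g U (n + 1) := by
  rw [plusSubgroup_eq_iInf_Cj, conjSubgroup_iInf']
  exact iInf_congr fun n => conjSubgroup_Cj g U n

lemma plus_eq_inf : U ⊓ conjSubgroup g (plusSubgroup g U) = plusSubgroup g U := by
  rw [conj_plus_eq, plusSubgroup_eq_iInf_Cj]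
  ext x
  simp only [Subgroup.mem_inf, Subgroup.mem_iInf]
  constructor
  · rintro ⟨hxU, hx⟩ n
    cases n with
    | zero => rwa [Cj_zero]
    | succ k => exact hx k
  · intro h
    exact ⟨by have := h 0; rwa [Cj_zero] at this, fun n => h (n + 1)⟩

end Main

theorem exists_finite_intersection_tidyAbove'
    [Group G] [TopologicalSpace G] [IsTopologicalGroup G] [LocallyCompactSpace G] [T2Space G]
    [TotallyDisconnectedSpace G]
    (g : G) (U : Subgroup G) (hU : IsCompact (U : Set G) ∧ IsOpen (U : Set G)) :
    ∃ N : ℕ, (IsCompact ((⨅ i : Fin (N + 1), conjSubgroup (g ^ (i : ℕ)) U : Subgroup G) : Set G) ∧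
        IsOpen ((⨅ i : Fin (N + 1), conjSubgroup (g ^ (i : ℕ)) U : Subgroup G) : Set G)) ∧
      (plusSubgroup g (⨅ i : Fin (N + 1), conjSubgroup (g ^ (i : ℕ)) U)).relIndex
          (conjSubgroup g (plusSubgroup g (⨅ i : Fin (N + 1), conjSubgroup (g ^ (i : ℕ)) U)))
        = (⨅ i : Fin (N + 1), conjSubgroup (g ^ (i : ℕ)) U).relIndex
          (conjSubgroup g (⨅ i : Fin (N + 1), conjSubgroup (g ^ (i : ℕ)) U)) := by
  classical
  -- basic topological facts about the conjugates
  have hCcompact : ∀ i : ℕ, IsCompact ((Cj g U i : Subgroup G) : Set G) := by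
    intro i
    rw [Cj, coe_conjSubgroup_image]
    exact hU.1.image (by continuity)
  have hCclosed : ∀ i : ℕ, IsClosed ((Cj g U i : Subgroup G) : Set G) :=
    fun i => (hCcompact i).isClosed
  have hCopen : ∀ i : ℕ, IsOpen ((Cj g U i : Subgroup G) : Set G) := by
    intro i
    rw [Cj, coe_conjSubgroup_preimage]
    exact hU.2.preimage (by continuity)
  -- Q = gU₊g⁻¹
  set Q : Subgroup G := conjSubgroup g (plusSubgroup g U) with hQ
  have hQset : (Q : Set G) = ⋂ n : ℕ, ((Cj g U (n + 1) : Subgroup G) : Set G) := by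
    rw [hQ, conj_plus_eq, Subgroup.coe_iInf]
  -- QU is open
  have hQUopen : IsOpen ((Q : Set G) * (U : Set G)) := hU.2.mul_left
  -- find N by compactness
  have hempty : (((Cj g U 1 : Subgroup G) : Set G) ∩ ((Q : Set G) * (U : Set G))ᶜ)
      ∩ ⋂ n : ℕ, ((Cj g U (n + 1) : Subgroup G) : Set G) = ∅ := by
    rw [Set.eq_empty_iff_forall_notMem]
    rintro x ⟨⟨-, hxc⟩, hx⟩
    apply hxc
    have hxQ : x ∈ (Q : Set G) := by rw [hQset]; exact hx
    exact ⟨x, hxQ, 1, one_mem U, mul_one x⟩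
  obtain ⟨t, ht⟩ := IsCompact.elim_finite_subfamily_closed
    ((hCcompact 1).inter_right hQUopen.isClosed_compl)
    (fun n : ℕ => ((Cj g U (n + 1) : Subgroup G) : Set G)) (fun n => hCclosed (n + 1)) hempty
  set N : ℕ := t.sup id with hN
  refine ⟨N, ?_, ?_⟩
  · -- compact open
    constructor
    · apply IsCompact.of_isClosed_subset hU.1
      · rw [Subgroup.coe_iInf]
        exact isClosed_iInter fun i => hCclosed i
      · intro x hx
        have : x ∈ (⨅ i : Fin (N + 1), conjSubgroup (g ^ (i : ℕ)) U) := hx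
        rw [Subgroup.mem_iInf] at this
        have h0 := this ⟨0, Nat.succ_pos N⟩
        simpa [conjSubgroup_one'] using h0
    · rw [Subgroup.coe_iInf]
      exact isOpen_iInter_of_finite fun i => hCopen i
  · -- tidy above
    set V : Subgroup G := ⨅ i : Fin (N + 1), conjSubgroup (g ^ (i : ℕ)) U with hV
    set W : Subgroup G := conjSubgroup g V with hW
    have hWeq : W = ⨅ i : Fin (N + 1), Cj g U ((i : ℕ) + 1) := conj_V_eq g U N
    -- plusSubgroup g V = plusSubgroup g U
    rw [show plusSubgroup g V = plusSubgroup g U from plus_V_eq g U N]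
    -- LHS = U.relIndex Q
    have hL : (plusSubgroup g U).relIndex Q = U.relIndex Q := by
      conv_lhs => rw [← plus_eq_inf g U]
      exact Subgroup.inf_relIndex_right U Q
    -- V ⊓ W = U ⊓ W
    have hVW : V ⊓ W = U ⊓ W := by
      ext x
      simp only [Subgroup.mem_inf]
      constructor
      · rintro ⟨hxV, hxW⟩
        refine ⟨?_, hxW⟩
        rw [hV, Subgroup.mem_iInf] at hxV
        have := hxV ⟨0, Nat.succ_pos N⟩
        simpa [conjSubgroup_one'] using this
      · rintro ⟨hxU, hxW⟩
        refine ⟨?_, hxW⟩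
        rw [hV, Subgroup.mem_iInf]
        rintro ⟨i, hi⟩
        cases i with
        | zero => simpa [conjSubgroup_one'] using hxU
        | succ k =>
          rw [hWeq, Subgroup.mem_iInf] at hxW
          have := hxW ⟨k, by omega⟩
          exact this
    have hR : V.relIndex W = U.relIndex W := by
      rw [← Subgroup.inf_relIndex_right V W, hVW, Subgroup.inf_relIndex_right]
    rw [hL, hR]
    -- remains : U.relIndex Q = U.relIndex W
    -- Q ≤ W
    have hQW : Q ≤ W := by
      rw [hQ, conj_plus_eq, hWeq]
      exact le_iInf fun i => iInf_le _ (i : ℕ)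
    -- coverage
    have hcov : (W : Set G) ⊆ (Q : Set G) * (U : Set G) := by
      intro x hx
      by_contra hxc
      have hxW : x ∈ W := hx
      rw [hWeq, Subgroup.mem_iInf] at hxW
      have hx1 : x ∈ ((Cj g U 1 : Subgroup G) : Set G) := by
        have := hxW ⟨0, Nat.succ_pos N⟩
        simpa using this
      have hxt : x ∈ ⋂ n ∈ t, ((Cj g U (n + 1) : Subgroup G) : Set G) := by
        simp only [Set.mem_iInter]
        intro n hn
        have hnN : n ≤ N := Finset.le_sup (f := id) hn
        exact hxW ⟨n, by omega⟩
      have : x ∈ (((Cj g U 1 : Subgroup G) : Set G) ∩ ((Q : Set G) * (U : Set G))ᶜ)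
          ∩ ⋂ n ∈ t, ((Cj g U (n + 1) : Subgroup G) : Set G) := ⟨⟨hx1, hxc⟩, hxt⟩
      rw [ht] at this
      exact this
    exact relindex_eq_of_cover hQW hcov


/-- For any compact open `U` there is `N` such that
`V = ⋂_{i=0}^{N} gⁱUg⁻ⁱ` is a compact open subgroup tidy above for `g`. -/
theorem exists_finite_intersection_tidyAbove
    [Group G] [TopologicalSpace G] [IsTopologicalGroup G] [LocallyCompactSpace G] [T2Space G]
    [TotallyDisconnectedSpace G]
    (g : G) (U : Subgroup G) (hU : U.IsCompactOpen) :
    ∃ N : ℕ, (⨅ i : Fin (N + 1), conjSubgroup (g ^ (i : ℕ)) U).IsCompactOpen ∧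
      TidyAbove g (⨅ i : Fin (N + 1), conjSubgroup (g ^ (i : ℕ)) U) := by
  obtain ⟨N, h1, h2⟩ := exists_finite_intersection_tidyAbove' g U hU
  exact ⟨N, ⟨h1.1, h1.2⟩, h2⟩
end
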